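/- For the Farey graph Tutte recursion with T₁(0)=1, N(0)=1 in ℤ[x,y], the evaluations at x = 1 satisfy T₁(n)(1,y) = y·T₁(n-1)² + 2·T₁(n-1)·N(n-1) and N(n)(1,y) = 2·T₁(n-1)·N(n-1), and consequently the total T(n)(1,y) = T₁(n)(1,y) satisfies T(n+1)/T(n)² = (2+y) − 2y·T(n-1)²/T(n) for n ≥ 1. -/
import Mathlib


open Polynomial

/-- Farey graph Tutte recursion in `ℤ[x][y]` (`y = X` outer, `x = C X` inner):
`T₁ 0 = N 0 = 1`, `T₁ (n+1) = y·T₁ n² + 2·T₁ n·N n + (x-1)·N n²`,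
`N (n+1) = 2·T₁ n·N n + (x-1)·N n²`, `T n = T₁ n + (x-1)·N n`.  Evaluating at `x = 1`
(mapping each coefficient by `eval 1`, yielding polynomials in `y`):
`T₁ n (1,y) = y·T₁ (n-1)² + 2·T₁ (n-1)·N (n-1)`, `N n (1,y) = 2·T₁ (n-1)·N (n-1)`,
and `T (n+1) = (2+y)·T n² - 2y·T (n-1)²·T n` at `x = 1`, for all `n ≥ 1`. -/
theorem farey_tutte_x_one_recursion
    (T₁ N : ℕ → Polynomial (Polynomial ℤ))
    (h10 : T₁ 0 = 1) (hN0 : N 0 = 1)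
    (h1 : ∀ n, T₁ (n + 1) =
      X * (T₁ n) ^ 2 + 2 * T₁ n * N n + (C X - 1) * (N n) ^ 2)
    (hN : ∀ n, N (n + 1) = 2 * T₁ n * N n + (C X - 1) * (N n) ^ 2) :
    ∀ n, 1 ≤ n →
      ((T₁ n).map (evalRingHom 1) =
        X * ((T₁ (n - 1)).map (evalRingHom 1)) ^ 2 +
          2 * (T₁ (n - 1)).map (evalRingHom 1) * (N (n - 1)).map (evalRingHom 1)) ∧
      ((N n).map (evalRingHom 1) =
        2 * (T₁ (n - 1)).map (evalRingHom 1) * (N (n - 1)).map (evalRingHom 1)) ∧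
      ((T₁ (n + 1) + (C X - 1) * N (n + 1)).map (evalRingHom 1) =
        (2 + X) * ((T₁ n + (C X - 1) * N n).map (evalRingHom 1)) ^ 2 -
          2 * X * ((T₁ (n - 1) + (C X - 1) * N (n - 1)).map (evalRingHom 1)) ^ 2 *
            (T₁ n + (C X - 1) * N n).map (evalRingHom 1)) := by
  have hCX : ((C X - 1 : Polynomial (Polynomial ℤ)).map (evalRingHom 1)) = 0 := by
    simp
  have hA : ∀ n, (T₁ (n + 1)).map (evalRingHom 1) =
      X * ((T₁ n).map (evalRingHom 1)) ^ 2 +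
        2 * (T₁ n).map (evalRingHom 1) * (N n).map (evalRingHom 1) := by
    intro n
    rw [h1 n]
    simp only [Polynomial.map_add, Polynomial.map_mul, Polynomial.map_pow,
      Polynomial.map_ofNat, Polynomial.map_X, hCX]
    ring
  have hB : ∀ n, (N (n + 1)).map (evalRingHom 1) =
      2 * (T₁ n).map (evalRingHom 1) * (N n).map (evalRingHom 1) := by
    intro n
    rw [hN n]
    simp only [Polynomial.map_add, Polynomial.map_mul, Polynomial.map_pow,
      Polynomial.map_ofNat, Polynomial.map_X, hCX]
    ring
  rintro (_ | m) hn
  · omega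
  · refine ⟨hA m, hB m, ?_⟩
    simp only [Nat.add_sub_cancel, Polynomial.map_add, Polynomial.map_mul, hCX, zero_mul,
      add_zero]
    rw [hA (m + 1), hB m, hA m]
    ring
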